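/- With the product x^α ⋆ x^β = (-1)^{χ(α,β)} x^{α+β} on C[Δ], the bracket {x^α, x^β} := (-1)^{χ(α,β)} χ(α,β) x^{α+β} is antisymmetric and satisfies the Jacobi identity, making C[Δ] a Poisson algebra (the bracket is a biderivation with respect to the product). -/

import Mathlib

/-- The twisted product on `ℂ[Δ]` determined on basis elements by
`x^α ⋆ x^β = (-1)^{χ(α,β)} x^{α+β}`. -/
noncomputable def twistedMul {Δ : Type*} [AddCommMonoid Δ] (χ : Δ → Δ → ℤ)
    (f g : Δ →₀ ℂ) : Δ →₀ ℂ :=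
  f.sum fun α a => g.sum fun β b =>
    Finsupp.single (α + β) (((-1 : ℂ) ^ (χ α β)) * a * b)

/-- The Poisson bracket on `ℂ[Δ]` determined on basis elements by
`{x^α, x^β} = (-1)^{χ(α,β)} χ(α,β) x^{α+β}`. -/
noncomputable def twistedBracket {Δ : Type*} [AddCommMonoid Δ] (χ : Δ → Δ → ℤ)
    (f g : Δ →₀ ℂ) : Δ →₀ ℂ :=
  f.sum fun α a => g.sum fun β b =>
    Finsupp.single (α + β) (((-1 : ℂ) ^ (χ α β)) * (χ α β : ℂ) * a * b)

namespace TwistedAux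

variable {Δ : Type*} [AddCommMonoid Δ]

/-- Generic bilinear-on-basis operation. -/
noncomputable def B (c : Δ → Δ → ℂ) (f g : Δ →₀ ℂ) : Δ →₀ ℂ :=
  f.sum fun α a => g.sum fun β b => Finsupp.single (α + β) (c α β * a * b)

lemma B_single_single (c : Δ → Δ → ℂ) (α β : Δ) (a b : ℂ) :
    B c (Finsupp.single α a) (Finsupp.single β b)
      = Finsupp.single (α + β) (c α β * a * b) := by
  unfold B
  rw [Finsupp.sum_single_index, Finsupp.sum_single_index]
  · simp
  · simp

lemma B_zero_left (c : Δ → Δ → ℂ) (g : Δ →₀ ℂ) : B c 0 g = 0 := by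
  simp [B]

lemma B_zero_right (c : Δ → Δ → ℂ) (f : Δ →₀ ℂ) : B c f 0 = 0 := by
  simp [B]

lemma B_add_left (c : Δ → Δ → ℂ) (f₁ f₂ g : Δ →₀ ℂ) :
    B c (f₁ + f₂) g = B c f₁ g + B c f₂ g := by
  unfold B
  rw [Finsupp.sum_add_index']
  · intro α
    simp
  · intro α a₁ a₂
    rw [← Finsupp.sum_add]
    refine Finsupp.sum_congr fun β _ => ?_
    rw [← Finsupp.single_add]
    ring_nf

lemma B_add_right (c : Δ → Δ → ℂ) (f g₁ g₂ : Δ →₀ ℂ) :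
    B c f (g₁ + g₂) = B c f g₁ + B c f g₂ := by
  unfold B
  rw [← Finsupp.sum_add]
  refine Finsupp.sum_congr fun α _ => ?_
  rw [Finsupp.sum_add_index']
  · intro β; simp
  · intro β b₁ b₂
    rw [mul_add, Finsupp.single_add]

omit [AddCommMonoid Δ] in
/-- Induction principle: two additive maps agreeing on singles agree. -/
lemma finsupp_eq_of_add {M : Type*} [AddCommMonoid M] (T S : (Δ →₀ ℂ) → M)
    (h0 : T 0 = S 0)
    (hT : ∀ f g, T (f + g) = T f + T g) (hS : ∀ f g, S (f + g) = S f + S g)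
    (hs : ∀ α a, T (Finsupp.single α a) = S (Finsupp.single α a)) :
    ∀ f, T f = S f := by
  intro f
  induction f using Finsupp.induction with
  | zero => exact h0
  | single_add α a f _ _ ih => rw [hT, hS, hs, ih]

lemma neg_one_zpow_add (m n : ℤ) : (-1 : ℂ) ^ (m + n) = (-1 : ℂ) ^ m * (-1 : ℂ) ^ n :=
  zpow_add₀ (by norm_num) m n

lemma neg_one_zpow_neg (n : ℤ) : (-1 : ℂ) ^ (-n) = (-1 : ℂ) ^ n := by
  rw [zpow_neg]
  refine inv_eq_of_mul_eq_one_left ?_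
  rw [← zpow_add₀ (by norm_num : (-1 : ℂ) ≠ 0), show n + n = 2 * n by ring, zpow_mul]
  norm_num

end TwistedAux

open TwistedAux in
/-- With the product `x^α ⋆ x^β = (-1)^{χ(α,β)} x^{α+β}` on `ℂ[Δ]`, the bracket
`{x^α, x^β} = (-1)^{χ(α,β)} χ(α,β) x^{α+β}` is antisymmetric, satisfies the Jacobi
identity, and is a biderivation with respect to the product, making `ℂ[Δ]` a
Poisson algebra. -/
theorem twistedBracket_poisson {Δ : Type*} [AddCommMonoid Δ] (χ : Δ → Δ → ℤ)
    (hadd_left : ∀ α β γ, χ (α + β) γ = χ α γ + χ β γ)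
    (hadd_right : ∀ α β γ, χ α (β + γ) = χ α β + χ α γ)
    (hskew : ∀ α β, χ α β = - χ β α) :
    (∀ f g : Δ →₀ ℂ, twistedBracket χ f g = - twistedBracket χ g f) ∧
    (∀ f g h : Δ →₀ ℂ,
      twistedBracket χ f (twistedBracket χ g h) +
        twistedBracket χ g (twistedBracket χ h f) +
        twistedBracket χ h (twistedBracket χ f g) = 0) ∧
    (∀ f g h : Δ →₀ ℂ,
      twistedBracket χ f (twistedMul χ g h) =
        twistedMul χ (twistedBracket χ f g) h + twistedMul χ g (twistedBracket χ f h)) := by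
  set c1 : Δ → Δ → ℂ := fun α β => (-1 : ℂ) ^ (χ α β) with hc1
  set c2 : Δ → Δ → ℂ := fun α β => ((-1 : ℂ) ^ (χ α β)) * (χ α β : ℂ) with hc2
  have hmul : twistedMul χ = B c1 := rfl
  have hbr : twistedBracket χ = B c2 := rfl
  rw [hmul, hbr]
  -- single-single cases
  have anti_ss : ∀ (α β : Δ) (a b : ℂ),
      B c2 (Finsupp.single α a) (Finsupp.single β b)
        = - B c2 (Finsupp.single β b) (Finsupp.single α a) := by
    intro α β a b
    rw [B_single_single, B_single_single, ← Finsupp.single_neg, add_comm β α]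
    congr 1
    rw [hc2]
    simp only
    rw [hskew β α, neg_one_zpow_neg]
    push_cast
    ring
  -- Jacobi on singles
  have jac_ss : ∀ (α β γ : Δ) (a b c : ℂ),
      B c2 (Finsupp.single α a) (B c2 (Finsupp.single β b) (Finsupp.single γ c)) +
        B c2 (Finsupp.single β b) (B c2 (Finsupp.single γ c) (Finsupp.single α a)) +
        B c2 (Finsupp.single γ c) (B c2 (Finsupp.single α a) (Finsupp.single β b)) = 0 := by
    intro α β γ a b c
    rw [B_single_single, B_single_single, B_single_single, B_single_single,
        B_single_single, B_single_single]
    rw [show β + (γ + α) = α + (β + γ) by abel, show γ + (α + β) = α + (β + γ) by abel,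
        ← Finsupp.single_add, ← Finsupp.single_add, Finsupp.single_eq_zero]
    simp only [hc2]
    rw [hadd_right α β γ, hadd_right β γ α, hadd_right γ α β,
        hskew β α, hskew γ α, hskew γ β]
    simp only [neg_one_zpow_add, neg_one_zpow_neg]
    push_cast
    ring
  -- Leibniz on singles
  have leib_ss : ∀ (α β γ : Δ) (a b c : ℂ),
      B c2 (Finsupp.single α a) (B c1 (Finsupp.single β b) (Finsupp.single γ c)) =
        B c1 (B c2 (Finsupp.single α a) (Finsupp.single β b)) (Finsupp.single γ c) +
          B c1 (Finsupp.single β b) (B c2 (Finsupp.single α a) (Finsupp.single γ c)) := by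
    intro α β γ a b c
    rw [B_single_single, B_single_single, B_single_single, B_single_single,
        B_single_single, B_single_single]
    rw [show α + β + γ = α + (β + γ) by abel, show β + (α + γ) = α + (β + γ) by abel,
        ← Finsupp.single_add]
    congr 1
    simp only [hc1, hc2]
    rw [hadd_right α β γ, hadd_left α β γ, hadd_right β α γ, hskew β α]
    simp only [neg_one_zpow_add, neg_one_zpow_neg]
    push_cast
    ring
  refine ⟨?_, ?_, ?_⟩
  · -- antisymmetry
    have step1 : ∀ (α : Δ) (a : ℂ) (g : Δ →₀ ℂ),
        B c2 (Finsupp.single α a) g = - B c2 g (Finsupp.single α a) := by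
      intro α a
      refine finsupp_eq_of_add (fun g => B c2 (Finsupp.single α a) g)
        (fun g => - B c2 g (Finsupp.single α a)) ?_ ?_ ?_ ?_
      · simp [B_zero_left, B_zero_right]
      · intro g g'; simp only [B_add_right]
      · intro g g'; simp only [B_add_left, neg_add]
      · intro β b; exact anti_ss α β a b
    intro f g
    refine finsupp_eq_of_add (fun f => B c2 f g) (fun f => - B c2 g f) ?_ ?_ ?_ ?_ f
    · simp [B_zero_left, B_zero_right]
    · intro f f'; simp only [B_add_left]
    · intro f f'; simp only [B_add_right, neg_add]
    · intro α a; exact step1 α a g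
  · -- Jacobi
    have step1 : ∀ (α β : Δ) (a b : ℂ) (h : Δ →₀ ℂ),
        B c2 (Finsupp.single α a) (B c2 (Finsupp.single β b) h) +
          B c2 (Finsupp.single β b) (B c2 h (Finsupp.single α a)) +
          B c2 h (B c2 (Finsupp.single α a) (Finsupp.single β b)) = 0 := by
      intro α β a b
      refine finsupp_eq_of_add (fun h => B c2 (Finsupp.single α a) (B c2 (Finsupp.single β b) h) +
          B c2 (Finsupp.single β b) (B c2 h (Finsupp.single α a)) +
          B c2 h (B c2 (Finsupp.single α a) (Finsupp.single β b))) (fun _ => 0) ?_ ?_ ?_ ?_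
      · simp [B_zero_left, B_zero_right]
      · intro h h'; simp only [B_add_left, B_add_right]; abel
      · intro h h'; simp
      · intro γ c; exact jac_ss α β γ a b c
    have step2 : ∀ (α : Δ) (a : ℂ) (g h : Δ →₀ ℂ),
        B c2 (Finsupp.single α a) (B c2 g h) +
          B c2 g (B c2 h (Finsupp.single α a)) +
          B c2 h (B c2 (Finsupp.single α a) g) = 0 := by
      intro α a g h
      refine finsupp_eq_of_add (fun g => B c2 (Finsupp.single α a) (B c2 g h) +
          B c2 g (B c2 h (Finsupp.single α a)) +
          B c2 h (B c2 (Finsupp.single α a) g)) (fun _ => 0) ?_ ?_ ?_ ?_ g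
      · simp [B_zero_left, B_zero_right]
      · intro g g'; simp only [B_add_left, B_add_right]; abel
      · intro g g'; simp
      · intro β b; exact step1 α β a b h
    intro f g h
    refine finsupp_eq_of_add (fun f => B c2 f (B c2 g h) +
        B c2 g (B c2 h f) + B c2 h (B c2 f g)) (fun _ => 0) ?_ ?_ ?_ ?_ f
    · simp [B_zero_left, B_zero_right]
    · intro f f'; simp only [B_add_left, B_add_right]; abel
    · intro f f'; simp
    · intro α a; exact step2 α a g h
  · -- Leibniz
    have step1 : ∀ (α β : Δ) (a b : ℂ) (h : Δ →₀ ℂ),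
        B c2 (Finsupp.single α a) (B c1 (Finsupp.single β b) h) =
          B c1 (B c2 (Finsupp.single α a) (Finsupp.single β b)) h +
            B c1 (Finsupp.single β b) (B c2 (Finsupp.single α a) h) := by
      intro α β a b
      refine finsupp_eq_of_add
        (fun h => B c2 (Finsupp.single α a) (B c1 (Finsupp.single β b) h))
        (fun h => B c1 (B c2 (Finsupp.single α a) (Finsupp.single β b)) h +
          B c1 (Finsupp.single β b) (B c2 (Finsupp.single α a) h)) ?_ ?_ ?_ ?_
      · simp [B_zero_left, B_zero_right]
      · intro h h'; simp only [B_add_left, B_add_right]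
      · intro h h'; simp only [B_add_left, B_add_right]; abel
      · intro γ c; exact leib_ss α β γ a b c
    have step2 : ∀ (α : Δ) (a : ℂ) (g h : Δ →₀ ℂ),
        B c2 (Finsupp.single α a) (B c1 g h) =
          B c1 (B c2 (Finsupp.single α a) g) h +
            B c1 g (B c2 (Finsupp.single α a) h) := by
      intro α a g h
      refine finsupp_eq_of_add
        (fun g => B c2 (Finsupp.single α a) (B c1 g h))
        (fun g => B c1 (B c2 (Finsupp.single α a) g) h +
          B c1 g (B c2 (Finsupp.single α a) h)) ?_ ?_ ?_ ?_ g
      · simp [B_zero_left, B_zero_right]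
      · intro g g'; simp only [B_add_left, B_add_right]
      · intro g g'; simp only [B_add_left, B_add_right]; abel
      · intro β b; exact step1 α β a b h
    intro f g h
    refine finsupp_eq_of_add
      (fun f => B c2 f (B c1 g h))
      (fun f => B c1 (B c2 f g) h + B c1 g (B c2 f h)) ?_ ?_ ?_ ?_ f
    · simp [B_zero_left, B_zero_right]
    · intro f f'; simp only [B_add_left, B_add_right]
    · intro f f'; simp only [B_add_left, B_add_right]; abel
    · intro α a; exact step2 α a g h
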